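/- Let ξ be irrational and Q ≥ 1 an integer. Then the points 0, {ξ}, {2ξ}, …, {Qξ} partition [0,1] into Q+1 subintervals whose lengths take at most three distinct values, and writing Q = p·q_{k−1} + q_{k−2} + w with 1 ≤ p ≤ a_k and 0 ≤ w < q_{k−1}, exactly Q+1−q_{k−1} intervals have length η_{k−1}, exactly w+1 have length η_{k−2} − p·η_{k−1}, and exactly q_{k−1} − (w+1) have length η_{k−2} − (p−1)·η_{k−1}. -/

import Mathlib

open scoped Classical

/-- η_k = (−1)^k (q_k ξ − p_k). -/
noncomputable def etaCF (ξ : ℝ) (p q : ℤ → ℤ) (k : ℤ) : ℝ :=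
  (-1 : ℝ) ^ k * ((q k : ℝ) * ξ - (p k : ℝ))

private lemma irr_lin (ξ : ℝ) (hξ : Irrational ξ) (c d : ℤ) (hc : c ≠ 0)
    (h : (c : ℝ) * ξ = (d : ℝ)) : False := by
  apply hξ
  refine ⟨(d : ℚ) / (c : ℚ), ?_⟩
  have hc' : (c : ℝ) ≠ 0 := Int.cast_ne_zero.mpr hc
  push_cast
  field_simp
  linear_combination -h

private lemma three_gap_core (ξ : ℝ) (hξ : Irrational ξ) (N : ℕ)
    (σ : ℕ → ℕ) (g : ℕ → ℝ)
    (hσle : ∀ j, j ≤ N → σ j ≤ N)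
    (hσinj : ∀ j, j ≤ N → ∀ j', j' ≤ N → σ j = σ j' → j = j')
    (hg0 : ∀ j, j ≤ N → 0 < g j)
    (hg1 : ∀ j, j ≤ N → g j < 1)
    (hsum : ∑ j ∈ Finset.range (N + 1), g j = 1)
    (hshift : ∀ j, j ≤ N → ∃ m : ℤ, ((σ j : ℝ)) * ξ = (j : ℝ) * ξ + g j + (m : ℝ)) :
    ∃ y : ℕ → ℝ,
      (∀ i j : ℕ, i ≤ N + 1 → j ≤ N + 1 → i < j → y i < y j) ∧
      y 0 = 0 ∧ y (N + 1) = 1 ∧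
      (∀ i, i ≤ N → ∃ j, j ≤ N ∧ y i = Int.fract ((j : ℝ) * ξ)) ∧
      (∀ j, j ≤ N → ∃ i, i ≤ N ∧ Int.fract ((j : ℝ) * ξ) = y i) ∧
      (∀ v : ℝ, ((Finset.range (N + 1)).filter (fun i => y (i + 1) - y i = v)).card
          = ((Finset.range (N + 1)).filter (fun j => g j = v)).card) := by
  classical
  set z : ℕ → ℝ := fun j => Int.fract ((j : ℝ) * ξ) with hzdef
  have hz01 : ∀ j, 0 ≤ z j := fun j => Int.fract_nonneg _
  have hzlt : ∀ j, z j < 1 := fun j => Int.fract_lt_one _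
  have hz0 : z 0 = 0 := by simp [hzdef]
  have hjle : ∀ i, σ^[i] 0 ≤ N := by
    intro i; induction i with
    | zero => simp
    | succ n ih => rw [Function.iterate_succ_apply']; exact hσle _ ih
  have hstep : ∀ t : ℕ, ∃ c : ℤ, (c = 0 ∨ c = -1) ∧
      z (σ^[t+1] 0) = z (σ^[t] 0) + g (σ^[t] 0) + (c : ℝ) := by
    intro t
    obtain ⟨m, hm⟩ := hshift _ (hjle t)
    have hiter : σ^[t+1] 0 = σ (σ^[t] 0) := Function.iterate_succ_apply' σ t 0
    have h1 : z (σ (σ^[t] 0)) = Int.fract ((σ^[t] 0 : ℝ) * ξ + g (σ^[t] 0)) := by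
      rw [hzdef]; simp only
      rw [hm, Int.fract_add_intCast]
    refine ⟨⌊(σ^[t] 0 : ℝ) * ξ⌋ - ⌊(σ^[t] 0 : ℝ) * ξ + g (σ^[t] 0)⌋, ?_, ?_⟩
    · have b1 : 0 ≤ z (σ (σ^[t] 0)) := hz01 _
      have b2 : z (σ (σ^[t] 0)) < 1 := hzlt _
      have b3 : 0 ≤ z (σ^[t] 0) := hz01 _
      have b4 : z (σ^[t] 0) < 1 := hzlt _
      have b5 : 0 < g (σ^[t] 0) := hg0 _ (hjle t)
      have b6 : g (σ^[t] 0) < 1 := hg1 _ (hjle t)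
      have key : z (σ (σ^[t] 0)) = z (σ^[t] 0) + g (σ^[t] 0)
          + ((⌊(σ^[t] 0 : ℝ) * ξ⌋ - ⌊(σ^[t] 0 : ℝ) * ξ + g (σ^[t] 0)⌋ : ℤ) : ℝ) := by
        rw [h1, hzdef]; simp only [Int.fract]; push_cast; ring
      have c1 : (-2 : ℝ) < ((⌊(σ^[t] 0 : ℝ) * ξ⌋ - ⌊(σ^[t] 0 : ℝ) * ξ + g (σ^[t] 0)⌋ : ℤ) : ℝ) := by
        linarith [key]
      have c2 : ((⌊(σ^[t] 0 : ℝ) * ξ⌋ - ⌊(σ^[t] 0 : ℝ) * ξ + g (σ^[t] 0)⌋ : ℤ) : ℝ) < 1 := by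
        linarith [key]
      have d1 : (-2 : ℤ) < ⌊(σ^[t] 0 : ℝ) * ξ⌋ - ⌊(σ^[t] 0 : ℝ) * ξ + g (σ^[t] 0)⌋ := by
        exact_mod_cast c1
      have d2 : ⌊(σ^[t] 0 : ℝ) * ξ⌋ - ⌊(σ^[t] 0 : ℝ) * ξ + g (σ^[t] 0)⌋ < 1 := by
        exact_mod_cast c2
      omega
    · rw [hiter, h1, hzdef]; simp only [Int.fract]; push_cast; ring
  choose c hc0 hcz using hstep
  have htel : ∀ i : ℕ, z (σ^[i] 0)
      = (∑ t ∈ Finset.range i, g (σ^[t] 0)) + ∑ t ∈ Finset.range i, (c t : ℝ) := by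
    intro i; induction i with
    | zero => simpa using hz0
    | succ n ih =>
      rw [Finset.sum_range_succ, Finset.sum_range_succ, hcz n]
      linarith [ih]
  -- Claim A
  have hA : ∀ m, 1 ≤ m → m ≤ N →
      (∀ u', u' < m → ∀ u, u < u' → σ^[u] 0 ≠ σ^[u'] 0) → σ^[m] 0 ≠ 0 := by
    intro m hm1 hmN hdist h0
    have hinjOn : ∀ u ∈ Finset.range m, ∀ u' ∈ Finset.range m,
        σ^[u] 0 = σ^[u'] 0 → u = u' := by
      intro u hu u' hu' h
      simp only [Finset.mem_range] at hu hu'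
      rcases lt_trichotomy u u' with h1 | h1 | h1
      · exact absurd h (hdist u' hu' u h1)
      · exact h1
      · exact absurd h.symm (hdist u hu u' h1)
    set S := (Finset.range m).image (fun t => σ^[t] 0) with hS
    have hsub : S ⊆ Finset.range (N+1) := by
      intro v hv
      simp only [hS, Finset.mem_image, Finset.mem_range] at hv
      obtain ⟨t, _, rfl⟩ := hv
      exact Finset.mem_range.mpr (Nat.lt_succ_of_le (hjle t))
    have hcard : S.card = m := by
      rw [hS, Finset.card_image_of_injOn
        (fun u hu u' hu' h => hinjOn u (by simpa using hu) u' (by simpa using hu') h),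
        Finset.card_range]
    have hmiss : ∃ v ∈ Finset.range (N+1), v ∉ S := by
      by_contra hno
      push_neg at hno
      have h1 : Finset.range (N+1) ⊆ S := fun v hv => hno v hv
      have := Finset.card_le_card h1
      rw [hcard, Finset.card_range] at this
      omega
    obtain ⟨v0, hv0r, hv0n⟩ := hmiss
    have hsum_lt : ∑ t ∈ Finset.range m, g (σ^[t] 0) < 1 := by
      have h1 : ∑ t ∈ Finset.range m, g (σ^[t] 0) = ∑ v ∈ S, g v :=
        (Finset.sum_image hinjOn).symm
      rw [h1, ← hsum]
      refine Finset.sum_lt_sum_of_subset hsub hv0r hv0n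
        (hg0 v0 (by simpa [Nat.lt_succ_iff] using hv0r)) ?_
      intro j hj _
      exact (hg0 j (by simpa [Nat.lt_succ_iff] using hj)).le
    have hsum_pos : 0 < ∑ t ∈ Finset.range m, g (σ^[t] 0) :=
      Finset.sum_pos (fun t _ => hg0 _ (hjle t))
        (Finset.nonempty_range_iff.mpr (by omega))
    have htelm := htel m
    rw [h0, hz0] at htelm
    have hMr : ((∑ t ∈ Finset.range m, c t : ℤ) : ℝ)
        = - ∑ t ∈ Finset.range m, g (σ^[t] 0) := by
      push_cast
      linarith [htelm]
    have hlo : (0:ℤ) < -(∑ t ∈ Finset.range m, c t) := by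
      have : (0:ℝ) < -((∑ t ∈ Finset.range m, c t : ℤ) : ℝ) := by rw [hMr]; linarith
      exact_mod_cast this
    have hhi : -(∑ t ∈ Finset.range m, c t) < 1 := by
      have : -((∑ t ∈ Finset.range m, c t : ℤ) : ℝ) < 1 := by rw [hMr]; linarith
      exact_mod_cast this
    omega
  -- injectivity of the orbit
  have hinj : ∀ t', t' ≤ N → ∀ t, t < t' → σ^[t] 0 ≠ σ^[t'] 0 := by
    intro t'
    induction t' using Nat.strong_induction_on with
    | _ t' IH =>
      intro ht' t ht heq
      rcases Nat.eq_zero_or_pos t with rfl | htpos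
      · exact hA t' (by omega) ht'
          (fun u' hu' u hu => IH u' (by omega) (by omega) u hu) heq.symm
      · obtain ⟨u, rfl⟩ : ∃ u, t = u + 1 := ⟨t - 1, by omega⟩
        obtain ⟨u', rfl⟩ : ∃ u', t' = u' + 1 := ⟨t' - 1, by omega⟩
        rw [Function.iterate_succ_apply', Function.iterate_succ_apply'] at heq
        have h2 : σ^[u] 0 = σ^[u'] 0 := hσinj _ (hjle u) _ (hjle u') heq
        exact IH u' (by omega) (by omega) u (by omega) h2
  have hinjOnFull : ∀ u ∈ Finset.range (N+1), ∀ u' ∈ Finset.range (N+1),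
      σ^[u] 0 = σ^[u'] 0 → u = u' := by
    intro u hu u' hu' h
    simp only [Finset.mem_range, Nat.lt_succ_iff] at hu hu'
    rcases lt_trichotomy u u' with h1 | h1 | h1
    · exact absurd h (hinj u' hu' u h1)
    · exact h1
    · exact absurd h.symm (hinj u hu u' h1)
  have himage : (Finset.range (N+1)).image (fun t => σ^[t] 0) = Finset.range (N+1) := by
    apply Finset.eq_of_subset_of_card_le
    · intro v hv
      simp only [Finset.mem_image, Finset.mem_range] at hv ⊢
      obtain ⟨t, _, rfl⟩ := hv
      exact Nat.lt_succ_of_le (hjle t)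
    · rw [Finset.card_image_of_injOn
        (fun u hu u' hu' h => hinjOnFull u (by simpa using hu) u' (by simpa using hu') h)]
  have hlast : σ^[N+1] 0 = 0 := by
    have hmem : σ^[N+1] 0 ∈ Finset.range (N+1) :=
      Finset.mem_range.mpr (Nat.lt_succ_of_le (hjle _))
    rw [← himage] at hmem
    simp only [Finset.mem_image, Finset.mem_range, Nat.lt_succ_iff] at hmem
    obtain ⟨i, hi, heq⟩ := hmem
    rcases Nat.eq_zero_or_pos i with rfl | hip
    · simpa using heq.symm
    · obtain ⟨u, rfl⟩ : ∃ u, i = u + 1 := ⟨i - 1, by omega⟩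
      rw [Function.iterate_succ_apply'] at heq
      have h2 : σ (σ^[u] 0) = σ (σ^[N] 0) :=
        heq.trans (Function.iterate_succ_apply' σ N 0)
      have h3 : σ^[u] 0 = σ^[N] 0 := hσinj _ (hjle u) _ (hjle N) h2
      exact absurd h3 (hinj N le_rfl u (by omega))
  have hsumg : ∑ t ∈ Finset.range (N+1), g (σ^[t] 0) = 1 := by
    have h1 : ∑ t ∈ Finset.range (N+1), g (σ^[t] 0)
        = ∑ v ∈ (Finset.range (N+1)).image (fun t => σ^[t] 0), g v :=
      (Finset.sum_image hinjOnFull).symm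
    rw [h1, himage, hsum]
  have hCsum : ((∑ t ∈ Finset.range (N+1), c t : ℤ) : ℝ) = -1 := by
    have := htel (N+1)
    rw [hlast, hz0] at this
    push_cast
    linarith [this, hsumg]
  have hCz : (∑ t ∈ Finset.range (N+1), c t) = (-1 : ℤ) := by exact_mod_cast hCsum
  have hcN : c N = -1 := by
    by_contra h
    have hc0' : c N = 0 := by rcases hc0 N with h' | h' <;> omega
    have h1 := hcz N
    rw [hc0', hlast, hz0] at h1
    have := hg0 _ (hjle N)
    have := hz01 (σ^[N] 0)
    push_cast at h1
    linarith
  have hct : ∀ t, t < N → c t = 0 := by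
    intro t ht
    have hsplit : ∑ t ∈ Finset.range N, c t = 0 := by
      have := hCz
      rw [Finset.sum_range_succ, hcN] at this
      omega
    by_contra h
    have hct' : c t = -1 := by rcases hc0 t with h' | h' <;> omega
    have hmem : t ∈ Finset.range N := Finset.mem_range.mpr ht
    have herase : ∑ u ∈ (Finset.range N).erase t, c u + c t = ∑ u ∈ Finset.range N, c u :=
      Finset.sum_erase_add _ _ hmem
    have hle : ∑ u ∈ (Finset.range N).erase t, c u ≤ 0 :=
      Finset.sum_nonpos (fun u _ => by rcases hc0 u with h' | h' <;> omega)
    omega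
  have hstep0 : ∀ t, t < N → z (σ^[t+1] 0) = z (σ^[t] 0) + g (σ^[t] 0) := by
    intro t ht
    have := hcz t
    rw [hct t ht] at this
    simpa using this
  have hstepN : z (σ^[N] 0) + g (σ^[N] 0) = 1 := by
    have := hcz N
    rw [hcN, hlast, hz0] at this
    push_cast at this
    linarith
  -- define y
  set y : ℕ → ℝ := fun i => if i ≤ N then z (σ^[i] 0) else 1 with hydef
  have hadj : ∀ t, t ≤ N → y t < y (t+1) := by
    intro t ht
    rcases Nat.lt_or_ge t N with h | h
    · have e1 : y t = z (σ^[t] 0) := by rw [hydef]; simp [ht]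
      have e2 : y (t+1) = z (σ^[t+1] 0) := by rw [hydef]; simp [Nat.succ_le_of_lt h]
      rw [e1, e2, hstep0 t h]
      linarith [hg0 _ (hjle t)]
    · have e0 : t = N := by omega
      rw [e0]
      have e1 : y N = z (σ^[N] 0) := by rw [hydef]; simp
      have e2 : y (N+1) = 1 := by rw [hydef]; simp
      rw [e1, e2]
      linarith [hg0 _ (hjle N), hstepN]
  have hmono : ∀ j, j ≤ N + 1 → ∀ i, i < j → y i < y j := by
    intro j
    induction j with
    | zero => intro _ i hi; omega
    | succ n ih =>
      intro hn i hi
      rcases Nat.lt_or_ge i n with h | h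
      · exact lt_trans (ih (by omega) i h) (hadj n (by omega))
      · have : i = n := by omega
        subst this
        exact hadj i (by omega)
  refine ⟨y, fun i j hi hj hij => hmono j hj i hij, ?_, ?_, ?_, ?_, ?_⟩
  · rw [hydef]; simpa using hz0
  · rw [hydef]; simp
  · intro i hi
    refine ⟨σ^[i] 0, hjle i, ?_⟩
    rw [hydef]; simp [hi, hzdef]
  · intro j hj
    have hmem : j ∈ Finset.range (N+1) := Finset.mem_range.mpr (by omega)
    rw [← himage] at hmem
    simp only [Finset.mem_image, Finset.mem_range, Nat.lt_succ_iff] at hmem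
    obtain ⟨t, ht, rfl⟩ := hmem
    refine ⟨t, ht, ?_⟩
    rw [hydef]; simp [ht, hzdef]
  · intro v
    have hfe : ∀ i ∈ Finset.range (N+1), ((y (i+1) - y i = v) ↔ (g (σ^[i] 0) = v)) := by
      intro i hi
      simp only [Finset.mem_range, Nat.lt_succ_iff] at hi
      have hyi : y i = z (σ^[i] 0) := by rw [hydef]; simp [hi]
      rcases Nat.lt_or_ge i N with h | h
      · have e2 : y (i+1) = z (σ^[i+1] 0) := by rw [hydef]; simp [Nat.succ_le_of_lt h]
        rw [hyi, e2, hstep0 i h]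
        constructor
        · intro hv; linarith
        · intro hv; linarith
      · have e0 : i = N := by omega
        rw [e0]
        have e2 : y (N+1) = 1 := by rw [hydef]; simp
        have hyN : y N = z (σ^[N] 0) := by rw [hydef]; simp
        rw [hyN, e2]
        constructor
        · intro hv; linarith [hstepN]
        · intro hv; linarith [hstepN]
    rw [Finset.filter_congr hfe]
    apply Finset.card_bij (fun i _ => σ^[i] 0)
    · intro a ha
      simp only [Finset.mem_filter, Finset.mem_range] at ha ⊢
      exact ⟨Nat.lt_succ_of_le (hjle a), ha.2⟩
    · intro a₁ ha₁ a₂ ha₂ h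
      exact hinjOnFull a₁ (Finset.mem_of_mem_filter _ ha₁) a₂ (Finset.mem_of_mem_filter _ ha₂) h
    · intro b hb
      simp only [Finset.mem_filter, Finset.mem_range, Nat.lt_succ_iff] at hb
      have hmem : b ∈ Finset.range (N+1) := Finset.mem_range.mpr (by omega)
      rw [← himage] at hmem
      simp only [Finset.mem_image, Finset.mem_range, Nat.lt_succ_iff] at hmem
      obtain ⟨t, ht, heq⟩ := hmem
      refine ⟨t, ?_, heq⟩
      simp only [Finset.mem_filter, Finset.mem_range, Nat.lt_succ_iff]
      exact ⟨ht, by rw [heq]; exact hb.2⟩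

set_option maxHeartbeats 4000000 in
/-- three distance theorem: the points 0, {ξ}, …, {Qξ} divide [0,1]
into Q+1 subintervals; with Q = pp·q_{k−1} + q_{k−2} + w (1 ≤ pp ≤ a_k,
0 ≤ w < q_{k−1}), exactly Q+1−q_{k−1} of them have length η_{k−1}, exactly w+1 have
length η_{k−2} − pp·η_{k−1}, and exactly q_{k−1}−(w+1) have length
η_{k−2} − (pp−1)·η_{k−1}. Here y enumerates the points 0 = y₀ < y₁ < … < y_Q and
y_{Q+1} = 1, so the subintervals are [y_i, y_{i+1}], 0 ≤ i ≤ Q. -/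
theorem three_distance_theorem
    (ξ : ℝ) (hξ : Irrational ξ) (x : ℕ → ℝ) (a p q : ℤ → ℤ)
    (hx0 : x 0 = ξ)
    (hxr : ∀ n : ℕ, x (n + 1) = 1 / (x n - ⌊x n⌋))
    (ha : ∀ n : ℕ, a (n : ℤ) = ⌊x n⌋)
    (hpm1 : p (-1) = 1) (hqm1 : q (-1) = 0) (hp0 : p 0 = a 0) (hq0 : q 0 = 1)
    (hpr : ∀ k : ℤ, 1 ≤ k → p k = a k * p (k - 1) + p (k - 2))
    (hqr : ∀ k : ℤ, 1 ≤ k → q k = a k * q (k - 1) + q (k - 2))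
    (Q : ℕ) (hQ : 1 ≤ Q) (k pp w : ℤ) (hk : 1 ≤ k)
    (hdec : (Q : ℤ) = pp * q (k - 1) + q (k - 2) + w)
    (hpp1 : 1 ≤ pp) (hppa : pp ≤ a k) (hw0 : 0 ≤ w) (hwq : w < q (k - 1)) :
    ∃ y : ℕ → ℝ,
      (∀ i j : ℕ, i ≤ Q + 1 → j ≤ Q + 1 → i < j → y i < y j) ∧
      y 0 = 0 ∧ y (Q + 1) = 1 ∧
      (∀ i ≤ Q, ∃ j ≤ Q, y i = Int.fract ((j : ℝ) * ξ)) ∧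
      (∀ j ≤ Q, ∃ i ≤ Q, Int.fract ((j : ℝ) * ξ) = y i) ∧
      (((Finset.range (Q + 1)).filter
          (fun i => y (i + 1) - y i = etaCF ξ p q (k - 1))).card : ℤ)
        = (Q : ℤ) + 1 - q (k - 1) ∧
      (((Finset.range (Q + 1)).filter
          (fun i => y (i + 1) - y i =
            etaCF ξ p q (k - 2) - (pp : ℝ) * etaCF ξ p q (k - 1))).card : ℤ)
        = w + 1 ∧
      (((Finset.range (Q + 1)).filter
          (fun i => y (i + 1) - y i =
            etaCF ξ p q (k - 2) - ((pp : ℝ) - 1) * etaCF ξ p q (k - 1))).card : ℤ)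
        = q (k - 1) - (w + 1) := by
  classical
  -- ===== basic facts about x =====
  have hxirr : ∀ n : ℕ, Irrational (x n) := by
    intro n
    induction n with
    | zero => rwa [hx0]
    | succ n ih =>
      rw [hxr n]
      have h1 : Irrational (x n - (⌊x n⌋ : ℝ)) := Irrational.sub_intCast ih _
      rw [one_div]
      exact h1.inv
  have hfr : ∀ n : ℕ, x n - (⌊x n⌋ : ℝ) = Int.fract (x n) := fun n => rfl
  have hfrpos : ∀ n : ℕ, 0 < Int.fract (x n) := by
    intro n
    rw [Int.fract_pos]
    intro h
    exact (hxirr n).ne_int ⌊x n⌋ h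
  have hxgt1 : ∀ n : ℕ, 1 < x (n + 1) := by
    intro n
    rw [hxr n, hfr n]
    rw [one_div]
    exact (one_lt_inv_iff₀).mpr ⟨hfrpos n, Int.fract_lt_one _⟩
  have hxpos : ∀ n : ℕ, 0 < x (n + 1) := fun n => lt_trans one_pos (hxgt1 n)
  have hxinv : ∀ n : ℕ, (x (n + 1))⁻¹ = Int.fract (x n) := by
    intro n
    rw [hxr n, hfr n, one_div, inv_inv]
  -- ===== the sequence e =====
  set e : ℕ → ℝ := fun n => ∏ i ∈ Finset.range (n + 1), (x (i + 1))⁻¹ with hedef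
  have he0 : e 0 = (x 1)⁻¹ := by rw [hedef]; simp
  have herec : ∀ n : ℕ, e (n + 1) = e n * (x (n + 2))⁻¹ := by
    intro n
    rw [hedef]
    exact Finset.prod_range_succ _ _
  have hepos : ∀ n : ℕ, 0 < e n := by
    intro n
    rw [hedef]
    exact Finset.prod_pos (fun i _ => inv_pos.mpr (hxpos i))
  have helt1 : ∀ n : ℕ, e n < 1 := by
    intro n
    induction n with
    | zero => rw [he0]; exact inv_lt_one_of_one_lt₀ (hxgt1 0)
    | succ n ih =>
      rw [herec n]
      have h2 : (x (n + 2))⁻¹ < 1 := inv_lt_one_of_one_lt₀ (hxgt1 (n + 1))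
      nlinarith [hepos n, inv_pos.mpr (hxpos (n + 1))]
  -- ===== a bounds =====
  have ha1 : ∀ n : ℕ, 1 ≤ a ((n + 1 : ℕ) : ℤ) := by
    intro n
    rw [ha (n + 1)]
    exact Int.le_floor.mpr (by exact_mod_cast (hxgt1 n).le)
  -- ===== the fundamental formula D_n = (-1)^n e n =====
  have ha0' : a 0 = ⌊x 0⌋ := by simpa using ha 0
  have hfx : Int.fract ξ = e 0 := by rw [he0, hxinv 0, hx0]
  have he00 : ξ - ((a 0 : ℤ) : ℝ) = e 0 := by
    have h1 : ξ - ((⌊ξ⌋ : ℤ) : ℝ) = Int.fract ξ := rfl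
    rw [ha0', hx0, h1]
    exact hfx
  have hx1ne : x 1 ≠ 0 := ne_of_gt (hxpos 0)
  have he0x : e 0 * x 1 = 1 := by rw [he0]; exact inv_mul_cancel₀ hx1ne
  have hD : ∀ n : ℕ, (q (n : ℤ) : ℝ) * ξ - (p (n : ℤ) : ℝ) = (-1 : ℝ) ^ (n : ℕ) * e n := by
    intro n
    induction n using Nat.strong_induction_on with
    | _ n IH =>
      match n with
      | 0 =>
        simp only [Nat.cast_zero, hq0, hp0, pow_zero]
        push_cast
        linarith [he00]
      | 1 =>
        have hq1 := hqr 1 le_rfl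
        have hp1 := hpr 1 le_rfl
        norm_num at hq1 hp1
        have ha1'' : a 1 = ⌊x 1⌋ := by simpa using ha 1
        have hx2 : (x 2)⁻¹ = x 1 - ((a 1 : ℤ) : ℝ) := by
          rw [hxinv 1, ha1'']
          exact (hfr 1).symm
        have he1 : e 1 = e 0 * (x 1 - ((a 1 : ℤ) : ℝ)) := by rw [herec 0, hx2]
        simp only [Nat.cast_one, hq1, hp1, hqm1, hpm1, hq0, hp0]
        rw [he1]
        push_cast
        linear_combination ((a 1 : ℤ) : ℝ) * he00 + he0x
      | (m + 2) =>
        have ih1 := IH (m + 1) (by omega)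
        have ih2 := IH m (by omega)
        have hge : (1:ℤ) ≤ ((m + 2 : ℕ) : ℤ) := by push_cast; omega
        have hqq := hqr ((m + 2 : ℕ) : ℤ) hge
        have hpp' := hpr ((m + 2 : ℕ) : ℤ) hge
        have e1 : ((m + 2 : ℕ) : ℤ) - 1 = ((m + 1 : ℕ) : ℤ) := by push_cast; ring
        have e2 : ((m + 2 : ℕ) : ℤ) - 2 = ((m : ℕ) : ℤ) := by push_cast; ring
        rw [e1, e2] at hqq hpp'
        have ham2 : ((a ((m + 2 : ℕ) : ℤ) : ℤ) : ℝ) = x (m + 2) - Int.fract (x (m + 2)) := by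
          rw [ha (m + 2)]
          linarith [hfr (m + 2)]
        have hx3 : (x (m + 3))⁻¹ = x (m + 2) - ((a ((m + 2 : ℕ) : ℤ) : ℤ) : ℝ) := by
          rw [hxinv (m + 2), ham2]
          ring
        have hE2 : e (m + 2) = e (m + 1) * (x (m + 2) - ((a ((m + 2 : ℕ) : ℤ) : ℤ) : ℝ)) := by
          rw [herec (m + 1), hx3]
        have hne : x (m + 2) ≠ 0 := ne_of_gt (hxpos (m + 1))
        have hXe : e (m + 1) * x (m + 2) = e m := by
          rw [herec m, mul_assoc, inv_mul_cancel₀ hne, mul_one]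
        rw [hqq, hpp', hE2]
        push_cast at ih1 ih2 ⊢
        linear_combination ((a ((m : ℤ) + 2) : ℤ) : ℝ) * ih1 + ih2 - (-1:ℝ)^m * hXe
  -- ===== q positivity =====
  have hq_pos : ∀ n : ℕ, (1:ℤ) ≤ q (n : ℤ) := by
    intro n
    induction n using Nat.strong_induction_on with
    | _ n IH =>
      match n with
      | 0 => simp [hq0]
      | 1 =>
        have hq1 := hqr 1 le_rfl
        norm_num at hq1
        simp only [Nat.cast_one]
        rw [hq1, hqm1, hq0]
        have := ha1 0
        push_cast at this ⊢
        nlinarith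
      | (m + 2) =>
        have ih1 := IH (m + 1) (by omega)
        have ih2 := IH m (by omega)
        have hge : (1:ℤ) ≤ ((m + 2 : ℕ) : ℤ) := by push_cast; omega
        have hqq := hqr ((m + 2 : ℕ) : ℤ) hge
        have e1 : ((m + 2 : ℕ) : ℤ) - 1 = ((m + 1 : ℕ) : ℤ) := by push_cast; ring
        have e2 : ((m + 2 : ℕ) : ℤ) - 2 = ((m : ℕ) : ℤ) := by push_cast; ring
        rw [e1, e2] at hqq
        have := ha1 (m + 1)
        rw [hqq]
        nlinarith
  -- ===== determinant =====
  have hdet : ∀ n : ℕ, p (n : ℤ) * q ((n : ℤ) - 1) - p ((n : ℤ) - 1) * q (n : ℤ)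
      = (-1 : ℤ) ^ (n + 1) := by
    intro n
    induction n with
    | zero =>
      norm_num [hp0, hq0, hpm1, hqm1]
    | succ m ih =>
      have hge : (1:ℤ) ≤ ((m + 1 : ℕ) : ℤ) := by push_cast; omega
      have hqq := hqr ((m + 1 : ℕ) : ℤ) hge
      have hpp' := hpr ((m + 1 : ℕ) : ℤ) hge
      have e1 : ((m + 1 : ℕ) : ℤ) - 1 = ((m : ℕ) : ℤ) := by push_cast; ring
      have e2 : ((m + 1 : ℕ) : ℤ) - 2 = ((m : ℕ) : ℤ) - 1 := by push_cast; ring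
      rw [e1, e2] at hqq hpp'
      rw [e1, hqq, hpp']
      have expand : p ((m:ℤ)) * q ((m:ℤ) - 1) - p ((m:ℤ) - 1) * q ((m:ℤ)) = (-1:ℤ)^(m+1) := ih
      push_cast at expand ⊢
      ring_nf
      ring_nf at expand
      linear_combination (-1 : ℤ) * expand
  -- ===== sign bookkeeping =====
  have hm1ne : (-1 : ℝ) ≠ 0 := by norm_num
  have hsk : (-1 : ℝ) ^ k = -((-1 : ℝ) ^ (k - 1)) := by
    have h := zpow_add_one₀ hm1ne (k - 1)
    rw [sub_add_cancel] at h
    rw [h]; ring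
  have hsk2 : (-1 : ℝ) ^ (k - 2) = -((-1 : ℝ) ^ (k - 1)) := by
    have h := zpow_add_one₀ hm1ne (k - 2)
    rw [show k - 2 + 1 = k - 1 by ring] at h
    rw [h]; ring
  set K1 : ℕ := (k - 1).toNat with hK1def
  have hK1 : (K1 : ℤ) = k - 1 := Int.toNat_of_nonneg (by omega)
  have hs_nat : (-1 : ℝ) ^ (k - 1) = (-1 : ℝ) ^ (K1 : ℕ) := by
    rw [← hK1, zpow_natCast]
  have hss : ((-1 : ℝ) ^ (k - 1)) * ((-1 : ℝ) ^ (k - 1)) = 1 := by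
    rw [hs_nat, ← pow_add]
    exact Even.neg_one_pow ⟨K1, by ring⟩
  -- ===== etaCF at natural indices =====
  have heta_nat : ∀ m : ℕ, etaCF ξ p q (m : ℤ) = e m := by
    intro m
    unfold etaCF
    rw [zpow_natCast, hD m]
    rw [← mul_assoc, ← pow_add]
    rw [Even.neg_one_pow ⟨m, by ring⟩, one_mul]
  -- ===== values of the three lengths =====
  have hk1i : k - 1 = (K1 : ℤ) := hK1.symm
  have heta1 : etaCF ξ p q (k - 1) = e K1 := by rw [hk1i]; exact heta_nat K1
  have heta1pos : 0 < etaCF ξ p q (k - 1) := by rw [heta1]; exact hepos K1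
  have heta1lt1 : etaCF ξ p q (k - 1) < 1 := by rw [heta1]; exact helt1 K1
  have hK : k = ((K1 + 1 : ℕ) : ℤ) := by push_cast; omega
  have hetakpos : 0 < etaCF ξ p q k := by
    rw [hK, heta_nat (K1 + 1)]; exact hepos (K1 + 1)
  have heta2pos : 0 < etaCF ξ p q (k - 2) := by
    rcases Nat.eq_zero_or_pos K1 with h0 | hpos
    · have hkm2 : k - 2 = (-1 : ℤ) := by omega
      rw [hkm2]
      unfold etaCF
      rw [hqm1, hpm1]
      norm_num
    · have hkm2 : k - 2 = ((K1 - 1 : ℕ) : ℤ) := by push_cast; omega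
      rw [hkm2, heta_nat (K1 - 1)]
      exact hepos (K1 - 1)
  have heta2le1 : etaCF ξ p q (k - 2) ≤ 1 := by
    rcases Nat.eq_zero_or_pos K1 with h0 | hpos
    · have hkm2 : k - 2 = (-1 : ℤ) := by omega
      rw [hkm2]
      unfold etaCF
      rw [hqm1, hpm1]
      norm_num
    · have hkm2 : k - 2 = ((K1 - 1 : ℕ) : ℤ) := by push_cast; omega
      rw [hkm2, heta_nat (K1 - 1)]
      exact (helt1 (K1 - 1)).le
  have heta2lt1 : 2 ≤ q (k - 1) → etaCF ξ p q (k - 2) < 1 := by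
    intro h2
    rcases Nat.eq_zero_or_pos K1 with h0 | hpos
    · exfalso
      have : k - 1 = 0 := by omega
      rw [this, hq0] at h2
      omega
    · have hkm2 : k - 2 = ((K1 - 1 : ℕ) : ℤ) := by push_cast; omega
      rw [hkm2, heta_nat (K1 - 1)]
      exact helt1 (K1 - 1)
  -- ===== eta recurrence: eta_{k-2} = a_k eta_{k-1} + eta_k =====
  have hetarec : etaCF ξ p q (k - 2) = (a k : ℝ) * etaCF ξ p q (k - 1) + etaCF ξ p q k := by
    have hqk := hqr k hk
    have hpk := hpr k hk
    have hqkr : ((q k : ℤ) : ℝ) = (a k : ℝ) * ((q (k-1) : ℤ) : ℝ) + ((q (k-2) : ℤ) : ℝ) := by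
      rw [hqk]; push_cast; ring
    have hpkr : ((p k : ℤ) : ℝ) = (a k : ℝ) * ((p (k-1) : ℤ) : ℝ) + ((p (k-2) : ℤ) : ℝ) := by
      rw [hpk]; push_cast; ring
    unfold etaCF
    rw [hsk, hsk2]
    linear_combination ((-1:ℝ)^(k-1)) * ξ * hqkr + (-(-1:ℝ)^(k-1)) * hpkr
  -- ===== the sum identity =====
  have hdetk : p (k - 1) * q (k - 2) - p (k - 2) * q (k - 1) = (-1 : ℤ) ^ (K1 + 1) := by
    have h := hdet K1
    rw [show (K1 : ℤ) - 1 = k - 2 by omega] at h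
    rw [hk1i.symm] at h
    exact h
  have hSum : (q (k - 1) : ℝ) * etaCF ξ p q (k - 2) + (q (k - 2) : ℝ) * etaCF ξ p q (k - 1)
      = 1 := by
    have hdr : ((p (k-1) : ℤ) : ℝ) * ((q (k-2) : ℤ) : ℝ) - ((p (k-2) : ℤ) : ℝ) * ((q (k-1) : ℤ) : ℝ)
        = (-1 : ℝ) ^ (K1 + 1) := by
      have := hdetk
      have h2 : (((-1 : ℤ) ^ (K1 + 1) : ℤ) : ℝ) = (-1 : ℝ) ^ (K1 + 1) := by push_cast; ring
      rw [← h2]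
      exact_mod_cast this
    unfold etaCF
    rw [hsk2]
    have hpow : (-1:ℝ)^(k-1) * (-1:ℝ)^(K1+1) = -1 := by
      rw [hs_nat, ← pow_add]
      have : Odd (K1 + (K1 + 1)) := ⟨K1, by ring⟩
      rw [this.neg_one_pow]
    linear_combination (-(-1:ℝ)^(k-1)) * hdr - hpow
  -- ===== abbreviations =====
  set E1 : ℝ := etaCF ξ p q (k - 1) with hE1def
  set E2 : ℝ := etaCF ξ p q (k - 2) with hE2def
  have hppr : (1:ℝ) ≤ (pp:ℝ) := by exact_mod_cast hpp1
  have hL2pos : 0 < E2 - (pp : ℝ) * E1 := by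
    have h1 : E2 - (pp:ℝ) * E1 = ((a k : ℝ) - (pp:ℝ)) * E1 + etaCF ξ p q k := by
      rw [hetarec]; ring
    have h2 : (pp:ℝ) ≤ (a k : ℝ) := by exact_mod_cast hppa
    nlinarith [heta1pos, hetakpos]
  have hL2lt1 : E2 - (pp:ℝ) * E1 < 1 := by nlinarith [heta1pos, heta2le1]
  have hL3pos : 0 < E2 - ((pp:ℝ) - 1) * E1 := by nlinarith [heta1pos, hL2pos]
  have hq1ge1 : (1:ℤ) ≤ q (k-1) := by
    have := hq_pos K1
    rwa [← hk1i] at this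
  have hq2ge0 : (0:ℤ) ≤ q (k-2) := by
    rcases Nat.eq_zero_or_pos K1 with h0 | hpos
    · rw [show k - 2 = (-1:ℤ) by omega, hqm1]
    · have := hq_pos (K1 - 1)
      rw [show ((K1 - 1 : ℕ):ℤ) = k - 2 by push_cast; omega] at this
      omega
  have hL12ne : E1 ≠ E2 - (pp:ℝ) * E1 := by
    intro h
    have h0 : E2 - (((pp + 1 : ℤ)):ℝ) * E1 = 0 := by push_cast; linarith
    have hlin : E2 - (((pp + 1 : ℤ)):ℝ) * E1
        = (-(-1:ℝ)^(k-1)) * (((q (k-2) + (pp+1) * q (k-1) : ℤ):ℝ) * ξ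
            - ((p (k-2) + (pp+1) * p (k-1) : ℤ):ℝ)) := by
      rw [hE1def, hE2def]
      simp only [etaCF]
      rw [hsk2]
      push_cast
      ring
    rw [h0] at hlin
    rcases mul_eq_zero.mp hlin.symm with hc | hc
    · have : (-1:ℝ)^(k-1) = 0 := by linarith
      rw [this] at hss
      norm_num at hss
    · refine irr_lin ξ hξ (q (k-2) + (pp+1) * q (k-1)) (p (k-2) + (pp+1) * p (k-1)) ?_ (by linarith [hc])
      have := mul_pos (show (0:ℤ) < pp + 1 by omega) (show (0:ℤ) < q (k-1) by omega)
      omega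
  have hL13ne : E1 ≠ E2 - ((pp:ℝ) - 1) * E1 := by
    intro h
    nlinarith [hL2pos]
  have hL23ne : E2 - (pp:ℝ) * E1 ≠ E2 - ((pp:ℝ) - 1) * E1 := by
    intro h
    nlinarith [heta1pos]
  -- ===== natural number bookkeeping =====
  set q1 : ℕ := (q (k-1)).toNat with hq1def
  set q2 : ℕ := (q (k-2)).toNat with hq2def
  set P : ℕ := pp.toNat with hPdef
  set W : ℕ := w.toNat with hWdef
  have hq1c : (q1:ℤ) = q (k-1) := Int.toNat_of_nonneg (by omega)
  have hq2c : (q2:ℤ) = q (k-2) := Int.toNat_of_nonneg hq2ge0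
  have hPc : (P:ℤ) = pp := Int.toNat_of_nonneg (by omega)
  have hWc : (W:ℤ) = w := Int.toNat_of_nonneg hw0
  set R : ℕ := P * q1 + q2 with hRdef
  have hRc : (R:ℤ) = pp * q (k-1) + q (k-2) := by
    rw [hRdef]; push_cast; rw [hq1c, hq2c, hPc]
  have hQRWz : (Q:ℤ) = (R:ℤ) + w := by rw [hRc]; linarith [hdec]
  have hQRW : Q = R + W := by omega
  have hWq1 : W < q1 := by omega
  have hq1pos : 1 ≤ q1 := by omega
  have hPpos : 1 ≤ P := by omega
  have hq1R : q1 ≤ R := by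
    have : q1 ≤ P * q1 := Nat.le_mul_of_pos_left q1 (by omega)
    omega
  have hRQ : R ≤ Q := by omega
  have hq1Q : q1 ≤ Q := by omega
  -- real casts
  have hq1r : ((q1:ℕ):ℝ) = ((q (k-1) : ℤ):ℝ) := by exact_mod_cast hq1c
  have hWr : ((W:ℕ):ℝ) = ((w : ℤ):ℝ) := by exact_mod_cast hWc
  have hRr : ((R:ℕ):ℝ) = (pp:ℝ) * ((q (k-1) : ℤ):ℝ) + ((q (k-2) : ℤ):ℝ) := by
    exact_mod_cast hRc
  have hQr : ((Q:ℕ):ℝ) = (pp:ℝ) * ((q (k-1) : ℤ):ℝ) + ((q (k-2) : ℤ):ℝ) + ((w:ℤ):ℝ) := by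
    exact_mod_cast hdec
  have cA : ((Q + 1 - q1 : ℕ):ℝ) = (Q:ℝ) + 1 - (q1:ℝ) := by
    exact_mod_cast (show ((Q + 1 - q1 : ℕ):ℤ) = (Q:ℤ) + 1 - (q1:ℤ) by omega)
  rcases Nat.even_or_odd K1 with hEv | hOd
  · -- (-1)^(k-1) = 1
    have hsval : (-1:ℝ)^(k-1) = 1 := by rw [hs_nat]; exact hEv.neg_one_pow
    have hE1s : ((q (k-1) : ℤ):ℝ) * ξ = E1 + ((p (k-1) : ℤ):ℝ) := by
      rw [hE1def]
      simp only [etaCF]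
      rw [hsval]
      ring
    have hE2s : ((q (k-2) : ℤ):ℝ) * ξ = ((p (k-2) : ℤ):ℝ) - E2 := by
      rw [hE2def]
      simp only [etaCF]
      rw [hsk2, hsval]
      ring
    have cB : ((Q + 1 - R : ℕ):ℝ) = (W:ℝ) + 1 := by
      exact_mod_cast (show ((Q + 1 - R : ℕ):ℤ) = (W:ℤ) + 1 by omega)
    have cC : ((R - (Q + 1 - q1) : ℕ):ℝ) = (q1:ℝ) - (W:ℝ) - 1 := by
      exact_mod_cast (show ((R - (Q + 1 - q1) : ℕ):ℤ) = (q1:ℤ) - (W:ℤ) - 1 by omega)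
    set σf : ℕ → ℕ := fun j => if j + q1 ≤ Q then j + q1 else if R ≤ j then j - R else j + q1 - R with hσfdef
    set gf : ℕ → ℝ := fun j => if j + q1 ≤ Q then E1 else if R ≤ j then E2 - (pp:ℝ) * E1
      else E2 - ((pp:ℝ) - 1) * E1 with hgfdef
    have hσle : ∀ j, j ≤ Q → σf j ≤ Q := by
      intro j hj
      rw [hσfdef]
      simp only
      split_ifs <;> omega
    have hσinj : ∀ j, j ≤ Q → ∀ j', j' ≤ Q → σf j = σf j' → j = j' := by
      intro j hj j' hj' h
      rw [hσfdef] at h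
      simp only at h
      split_ifs at h <;> omega
    have hg0' : ∀ j, j ≤ Q → 0 < gf j := by
      intro j hj
      rw [hgfdef]
      simp only
      split_ifs with h1 h2
      · exact heta1pos
      · exact hL2pos
      · exact hL3pos
    have hg1' : ∀ j, j ≤ Q → gf j < 1 := by
      intro j hj
      rw [hgfdef]
      simp only
      split_ifs with h1 h2
      · exact heta1lt1
      · exact hL2lt1
      · have h3 : 2 ≤ q (k - 1) := by omega
        have h4 := heta2lt1 h3
        nlinarith [heta1pos]
    have hfilt1 : (Finset.range (Q+1)).filter (fun j => gf j = E1) = Finset.range (Q + 1 - q1) := by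
      ext j
      simp only [Finset.mem_filter, Finset.mem_range, Finset.mem_Icc, Finset.mem_Ico]
      rw [hgfdef]
      simp only
      constructor
      · rintro ⟨hjQ, hg⟩
        split_ifs at hg with h1 h2
        · omega
        · exact absurd hg.symm hL12ne
        · exact absurd hg.symm hL13ne
      · intro hj
        have h1 : j + q1 ≤ Q := by omega
        rw [if_pos h1]
        exact ⟨by omega, rfl⟩
    have hfilt2 : (Finset.range (Q+1)).filter (fun j => gf j = E2 - (pp:ℝ) * E1) = Finset.Icc R Q := by
      ext j
      simp only [Finset.mem_filter, Finset.mem_range, Finset.mem_Icc, Finset.mem_Ico]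
      rw [hgfdef]
      simp only
      constructor
      · rintro ⟨hjQ, hg⟩
        split_ifs at hg with h1 h2
        · exact absurd hg hL12ne
        · omega
        · exact absurd hg.symm hL23ne
      · intro hj
        have h1 : ¬ (j + q1 ≤ Q) := by omega
        have h2 : R ≤ j := by omega
        rw [if_neg h1, if_pos h2]
        exact ⟨by omega, rfl⟩
    have hfilt3 : (Finset.range (Q+1)).filter
        (fun j => gf j = E2 - ((pp:ℝ) - 1) * E1) = Finset.Ico (Q + 1 - q1) R := by
      ext j
      simp only [Finset.mem_filter, Finset.mem_range, Finset.mem_Icc, Finset.mem_Ico]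
      rw [hgfdef]
      simp only
      constructor
      · rintro ⟨hjQ, hg⟩
        split_ifs at hg with h1 h2
        · exact absurd hg hL13ne
        · exact absurd hg hL23ne
        · omega
      · intro hj
        have h1 : ¬ (j + q1 ≤ Q) := by omega
        have h2 : ¬ (R ≤ j) := by omega
        rw [if_neg h1, if_neg h2]
        exact ⟨by omega, rfl⟩
    have hdecomp : Finset.range (Q+1) = (Finset.range (Q + 1 - q1) ∪ Finset.Icc R Q) ∪ Finset.Ico (Q + 1 - q1) R := by
      ext j
      simp only [Finset.mem_union, Finset.mem_range, Finset.mem_Icc, Finset.mem_Ico]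
      omega
    have hdisj1 : Disjoint (Finset.range (Q + 1 - q1) : Finset ℕ) (Finset.Icc R Q : Finset ℕ) := by
      rw [Finset.disjoint_left]
      intro j h1 h2
      simp only [Finset.mem_range, Finset.mem_Icc, Finset.mem_Ico] at h1 h2
      omega
    have hdisj2 : Disjoint ((Finset.range (Q + 1 - q1) ∪ Finset.Icc R Q) : Finset ℕ) (Finset.Ico (Q + 1 - q1) R : Finset ℕ) := by
      rw [Finset.disjoint_left]
      intro j h1 h2
      simp only [Finset.mem_union, Finset.mem_range, Finset.mem_Icc, Finset.mem_Ico] at h1 h2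
      omega
    have hval1 : ∀ j ∈ (Finset.range (Q + 1 - q1) : Finset ℕ), gf j = E1 := by
      intro j hj
      simp only [Finset.mem_range, Finset.mem_Icc, Finset.mem_Ico] at hj
      rw [hgfdef]
      simp only
      rw [if_pos (show j + q1 ≤ Q by omega)]
    have hval2 : ∀ j ∈ (Finset.Icc R Q : Finset ℕ), gf j = E2 - (pp:ℝ) * E1 := by
      intro j hj
      simp only [Finset.mem_range, Finset.mem_Icc, Finset.mem_Ico] at hj
      rw [hgfdef]
      simp only
      rw [if_neg (show ¬ (j + q1 ≤ Q) by omega), if_pos (show R ≤ j by omega)]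
    have hval3 : ∀ j ∈ (Finset.Ico (Q + 1 - q1) R : Finset ℕ), gf j = E2 - ((pp:ℝ) - 1) * E1 := by
      intro j hj
      simp only [Finset.mem_range, Finset.mem_Icc, Finset.mem_Ico] at hj
      rw [hgfdef]
      simp only
      rw [if_neg (show ¬ (j + q1 ≤ Q) by omega), if_neg (show ¬ (R ≤ j) by omega)]
    have hsum' : ∑ j ∈ Finset.range (Q+1), gf j = 1 := by
      rw [hdecomp, Finset.sum_union hdisj2, Finset.sum_union hdisj1]
      rw [Finset.sum_congr rfl hval1, Finset.sum_congr rfl hval2, Finset.sum_congr rfl hval3]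
      rw [Finset.sum_const, Finset.sum_const, Finset.sum_const]
      rw [Finset.card_range, Nat.card_Icc, Nat.card_Ico]
      rw [nsmul_eq_mul, nsmul_eq_mul, nsmul_eq_mul]
      rw [cA, cB, cC]
      rw [hq1r, hWr]
      linear_combination hSum + E1 * hQr
    have hshift' : ∀ j, j ≤ Q → ∃ m : ℤ, ((σf j : ℝ)) * ξ = (j:ℝ) * ξ + gf j + (m:ℝ) := by
      intro j hj
      rw [hσfdef, hgfdef]
      simp only
      split_ifs with h1 h2
      · refine ⟨p (k-1), ?_⟩
        push_cast
        linear_combination ξ * hq1r + hE1s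
      · refine ⟨-(pp * p (k-1) + p (k-2)), ?_⟩
        rw [Nat.cast_sub h2]
        push_cast
        linear_combination (-ξ) * hRr + (-(pp:ℝ)) * hE1s - hE2s
      · refine ⟨p (k-1) - (pp * p (k-1) + p (k-2)), ?_⟩
        rw [Nat.cast_sub (show R ≤ j + q1 by omega)]
        push_cast
        linear_combination ξ * hq1r + hE1s + (-ξ) * hRr + (-(pp:ℝ)) * hE1s - hE2s
    obtain ⟨y, hy1, hy2, hy3, hy4, hy5, hy6⟩ :=
      three_gap_core ξ hξ Q σf gf hσle hσinj hg0' hg1' hsum' hshift'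
    refine ⟨y, hy1, hy2, hy3, hy4, hy5, ?_, ?_, ?_⟩
    · rw [hy6 E1, hfilt1, Finset.card_range]
      omega
    · rw [hy6 (E2 - (pp:ℝ) * E1), hfilt2, Nat.card_Icc]
      omega
    · rw [hy6 (E2 - ((pp:ℝ) - 1) * E1), hfilt3, Nat.card_Ico]
      omega
  · -- (-1)^(k-1) = -1
    have hsval : (-1:ℝ)^(k-1) = -1 := by rw [hs_nat]; exact hOd.neg_one_pow
    have hE1s : ((q (k-1) : ℤ):ℝ) * ξ = -E1 + ((p (k-1) : ℤ):ℝ) := by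
      rw [hE1def]
      simp only [etaCF]
      rw [hsval]
      ring
    have hE2s : ((q (k-2) : ℤ):ℝ) * ξ = E2 + ((p (k-2) : ℤ):ℝ) := by
      rw [hE2def]
      simp only [etaCF]
      rw [hsk2, hsval]
      ring
    have cA' : ((Q + 1 - q1 : ℕ):ℝ) = (Q:ℝ) + 1 - (q1:ℝ) := cA
    have cB' : ((W + 1 : ℕ):ℝ) = (W:ℝ) + 1 := by push_cast; ring
    have cC' : ((q1 - (W + 1) : ℕ):ℝ) = (q1:ℝ) - (W:ℝ) - 1 := by
      exact_mod_cast (show ((q1 - (W + 1) : ℕ):ℤ) = (q1:ℤ) - (W:ℤ) - 1 by omega)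
    set σf : ℕ → ℕ := fun j => if q1 ≤ j then j - q1 else if j ≤ W then j + R else j + R - q1 with hσfdef
    set gf : ℕ → ℝ := fun j => if q1 ≤ j then E1 else if j ≤ W then E2 - (pp:ℝ) * E1
      else E2 - ((pp:ℝ) - 1) * E1 with hgfdef
    have hσle : ∀ j, j ≤ Q → σf j ≤ Q := by
      intro j hj
      rw [hσfdef]
      simp only
      split_ifs <;> omega
    have hσinj : ∀ j, j ≤ Q → ∀ j', j' ≤ Q → σf j = σf j' → j = j' := by
      intro j hj j' hj' h
      rw [hσfdef] at h
      simp only at h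
      split_ifs at h <;> omega
    have hg0' : ∀ j, j ≤ Q → 0 < gf j := by
      intro j hj
      rw [hgfdef]
      simp only
      split_ifs with h1 h2
      · exact heta1pos
      · exact hL2pos
      · exact hL3pos
    have hg1' : ∀ j, j ≤ Q → gf j < 1 := by
      intro j hj
      rw [hgfdef]
      simp only
      split_ifs with h1 h2
      · exact heta1lt1
      · exact hL2lt1
      · have h3 : 2 ≤ q (k - 1) := by omega
        have h4 := heta2lt1 h3
        nlinarith [heta1pos]
    have hfilt1 : (Finset.range (Q+1)).filter (fun j => gf j = E1) = Finset.Icc q1 Q := by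
      ext j
      simp only [Finset.mem_filter, Finset.mem_range, Finset.mem_Icc, Finset.mem_Ico]
      rw [hgfdef]
      simp only
      constructor
      · rintro ⟨hjQ, hg⟩
        split_ifs at hg with h1 h2
        · omega
        · exact absurd hg.symm hL12ne
        · exact absurd hg.symm hL13ne
      · intro hj
        have h1 : q1 ≤ j := by omega
        rw [if_pos h1]
        exact ⟨by omega, rfl⟩
    have hfilt2 : (Finset.range (Q+1)).filter (fun j => gf j = E2 - (pp:ℝ) * E1) = Finset.range (W + 1) := by
      ext j
      simp only [Finset.mem_filter, Finset.mem_range, Finset.mem_Icc, Finset.mem_Ico]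
      rw [hgfdef]
      simp only
      constructor
      · rintro ⟨hjQ, hg⟩
        split_ifs at hg with h1 h2
        · exact absurd hg hL12ne
        · omega
        · exact absurd hg.symm hL23ne
      · intro hj
        have h1 : ¬ (q1 ≤ j) := by omega
        have h2 : j ≤ W := by omega
        rw [if_neg h1, if_pos h2]
        exact ⟨by omega, rfl⟩
    have hfilt3 : (Finset.range (Q+1)).filter
        (fun j => gf j = E2 - ((pp:ℝ) - 1) * E1) = Finset.Ico (W + 1) q1 := by
      ext j
      simp only [Finset.mem_filter, Finset.mem_range, Finset.mem_Icc, Finset.mem_Ico]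
      rw [hgfdef]
      simp only
      constructor
      · rintro ⟨hjQ, hg⟩
        split_ifs at hg with h1 h2
        · exact absurd hg hL13ne
        · exact absurd hg hL23ne
        · omega
      · intro hj
        have h1 : ¬ (q1 ≤ j) := by omega
        have h2 : ¬ (j ≤ W) := by omega
        rw [if_neg h1, if_neg h2]
        exact ⟨by omega, rfl⟩
    have hdecomp : Finset.range (Q+1) = (Finset.Icc q1 Q ∪ Finset.range (W + 1)) ∪ Finset.Ico (W + 1) q1 := by
      ext j
      simp only [Finset.mem_union, Finset.mem_range, Finset.mem_Icc, Finset.mem_Ico]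
      omega
    have hdisj1 : Disjoint (Finset.Icc q1 Q : Finset ℕ) (Finset.range (W + 1) : Finset ℕ) := by
      rw [Finset.disjoint_left]
      intro j h1 h2
      simp only [Finset.mem_range, Finset.mem_Icc, Finset.mem_Ico] at h1 h2
      omega
    have hdisj2 : Disjoint ((Finset.Icc q1 Q ∪ Finset.range (W + 1)) : Finset ℕ) (Finset.Ico (W + 1) q1 : Finset ℕ) := by
      rw [Finset.disjoint_left]
      intro j h1 h2
      simp only [Finset.mem_union, Finset.mem_range, Finset.mem_Icc, Finset.mem_Ico] at h1 h2
      omega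
    have hval1 : ∀ j ∈ (Finset.Icc q1 Q : Finset ℕ), gf j = E1 := by
      intro j hj
      simp only [Finset.mem_range, Finset.mem_Icc, Finset.mem_Ico] at hj
      rw [hgfdef]
      simp only
      rw [if_pos (show q1 ≤ j by omega)]
    have hval2 : ∀ j ∈ (Finset.range (W + 1) : Finset ℕ), gf j = E2 - (pp:ℝ) * E1 := by
      intro j hj
      simp only [Finset.mem_range, Finset.mem_Icc, Finset.mem_Ico] at hj
      rw [hgfdef]
      simp only
      rw [if_neg (show ¬ (q1 ≤ j) by omega), if_pos (show j ≤ W by omega)]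
    have hval3 : ∀ j ∈ (Finset.Ico (W + 1) q1 : Finset ℕ), gf j = E2 - ((pp:ℝ) - 1) * E1 := by
      intro j hj
      simp only [Finset.mem_range, Finset.mem_Icc, Finset.mem_Ico] at hj
      rw [hgfdef]
      simp only
      rw [if_neg (show ¬ (q1 ≤ j) by omega), if_neg (show ¬ (j ≤ W) by omega)]
    have hsum' : ∑ j ∈ Finset.range (Q+1), gf j = 1 := by
      rw [hdecomp, Finset.sum_union hdisj2, Finset.sum_union hdisj1]
      rw [Finset.sum_congr rfl hval1, Finset.sum_congr rfl hval2, Finset.sum_congr rfl hval3]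
      rw [Finset.sum_const, Finset.sum_const, Finset.sum_const]
      rw [Nat.card_Icc, Finset.card_range, Nat.card_Ico]
      rw [nsmul_eq_mul, nsmul_eq_mul, nsmul_eq_mul]
      rw [cA', cB', cC']
      rw [hq1r, hWr]
      linear_combination hSum + E1 * hQr
    have hshift' : ∀ j, j ≤ Q → ∃ m : ℤ, ((σf j : ℝ)) * ξ = (j:ℝ) * ξ + gf j + (m:ℝ) := by
      intro j hj
      rw [hσfdef, hgfdef]
      simp only
      split_ifs with h1 h2
      · refine ⟨-(p (k-1)), ?_⟩
        rw [Nat.cast_sub h1]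
        push_cast
        linear_combination (-ξ) * hq1r - hE1s
      · refine ⟨pp * p (k-1) + p (k-2), ?_⟩
        push_cast
        linear_combination ξ * hRr + ((pp:ℝ)) * hE1s + hE2s
      · refine ⟨pp * p (k-1) + p (k-2) - p (k-1), ?_⟩
        rw [Nat.cast_sub (show q1 ≤ j + R by omega)]
        push_cast
        linear_combination ξ * hRr + ((pp:ℝ)) * hE1s + hE2s + (-ξ) * hq1r - hE1s
    obtain ⟨y, hy1, hy2, hy3, hy4, hy5, hy6⟩ :=
      three_gap_core ξ hξ Q σf gf hσle hσinj hg0' hg1' hsum' hshift'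
    refine ⟨y, hy1, hy2, hy3, hy4, hy5, ?_, ?_, ?_⟩
    · rw [hy6 E1, hfilt1, Nat.card_Icc]
      omega
    · rw [hy6 (E2 - (pp:ℝ) * E1), hfilt2, Finset.card_range]
      omega
    · rw [hy6 (E2 - ((pp:ℝ) - 1) * E1), hfilt3, Nat.card_Ico]
      omega
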